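/- If G is a finitely generated group acting by isometries on a Λ-tree T with 2Λ = Λ, and every element of G fixes a point of T, then G has a global fixed point in T. -/

import Mathlib

/-- A segment from `x` to `y` in a `Λ`-metric space `(T, d)`: a subset isometric to an
interval `[a, b]` of `Λ` with endpoints `x` and `y`. -/
def IsSegment {Λ : Type*} [AddCommGroup Λ] [LinearOrder Λ] [IsOrderedAddMonoid Λ] {T : Type*}
    (d : T → T → Λ) (S : Set T) (x y : T) : Prop :=
  ∃ (a b : Λ) (f : Λ → T), a ≤ b ∧ f a = x ∧ f b = y ∧ S = f '' Set.Icc a b ∧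
    ∀ s ∈ Set.Icc a b, ∀ t ∈ Set.Icc a b, d (f s) (f t) = |s - t|

/-- `(T, d)` is a `Λ`-tree: a `Λ`-metric space in which any two points are joined by a
segment, the intersection of two segments with a common endpoint is a segment, and the
union of two segments meeting exactly in a common endpoint is a segment. -/
def IsLambdaTree {Λ : Type*} [AddCommGroup Λ] [LinearOrder Λ] [IsOrderedAddMonoid Λ] {T : Type*}
    (d : T → T → Λ) : Prop :=
  (∀ x y : T, d x y = 0 ↔ x = y) ∧
  (∀ x y : T, d x y = d y x) ∧
  (∀ x y z : T, d x z ≤ d x y + d y z) ∧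
  (∀ x y : T, ∃ S : Set T, IsSegment d S x y) ∧
  (∀ (S₁ S₂ : Set T) (x y z : T), IsSegment d S₁ x y → IsSegment d S₂ x z →
    ∃ (S : Set T) (w : T), IsSegment d S x w ∧ S₁ ∩ S₂ = S) ∧
  (∀ (S₁ S₂ : Set T) (x y z : T), IsSegment d S₁ x y → IsSegment d S₂ x z →
    S₁ ∩ S₂ = {x} → IsSegment d (S₁ ∪ S₂) y z)

namespace Stmt14

variable {Λ : Type*} [AddCommGroup Λ] [LinearOrder Λ] [IsOrderedAddMonoid Λ] {T : Type*} {d : T → T → Λ}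

lemma two_nonneg {t : Λ} (h : 0 ≤ t + t) : 0 ≤ t := by
  by_contra h'
  push_neg at h'
  exact absurd h (not_le.mpr (by simpa using add_lt_add h' h'))

lemma two_cancel {a b : Λ} (h : a + a = b + b) : a = b := by
  rcases lt_trichotomy a b with h' | h' | h'
  · exact absurd h (ne_of_lt (add_lt_add h' h'))
  · exact h'
  · exact absurd h (ne_of_gt (add_lt_add h' h'))

lemma aux1 {a b s : Λ} (h : s ≤ b) : a ≤ a + b - s := by
  have : a + b - s = a + (b - s) := by abel
  rw [this]
  exact le_add_of_nonneg_right (sub_nonneg.mpr h)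

lemma aux2 {a b s : Λ} (h : a ≤ s) : a + b - s ≤ b := by
  have : a + b - s = b + (a - s) := by abel
  rw [this]
  exact add_le_of_nonpos_right (sub_nonpos.mpr h)

lemma d_self (ht : IsLambdaTree d) (x : T) : d x x = 0 := (ht.1 x x).mpr rfl

lemma d_nonneg (ht : IsLambdaTree d) (x y : T) : 0 ≤ d x y := by
  have h := ht.2.2.1 x y x
  rw [d_self ht, ht.2.1 y x] at h
  exact two_nonneg h

lemma mem_left {S : Set T} {x y : T} (h : IsSegment d S x y) : x ∈ S := by
  obtain ⟨a, b, f, hab, hfa, hfb, hS, hd⟩ := h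
  exact hS ▸ ⟨a, ⟨le_refl a, hab⟩, hfa⟩

lemma mem_right {S : Set T} {x y : T} (h : IsSegment d S x y) : y ∈ S := by
  obtain ⟨a, b, f, hab, hfa, hfb, hS, hd⟩ := h
  exact hS ▸ ⟨b, ⟨hab, le_refl b⟩, hfb⟩

lemma between {S : Set T} {x y : T} (h : IsSegment d S x y) {p : T} (hp : p ∈ S) :
    d x p + d p y = d x y := by
  obtain ⟨a, b, f, hab, hfa, hfb, hS, hd⟩ := h
  rw [hS] at hp
  obtain ⟨s, hs, rfl⟩ := hp
  subst hfa hfb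
  have h1 := hd a ⟨le_refl a, hab⟩ s hs
  have h2 := hd s hs b ⟨hab, le_refl b⟩
  have h3 := hd a ⟨le_refl a, hab⟩ b ⟨hab, le_refl b⟩
  rw [abs_of_nonpos (sub_nonpos.mpr hs.1)] at h1
  rw [abs_of_nonpos (sub_nonpos.mpr hs.2)] at h2
  rw [abs_of_nonpos (sub_nonpos.mpr hab)] at h3
  rw [h1, h2, h3]; abel

lemma dist_unique {S : Set T} {x y : T} (h : IsSegment d S x y) {p q : T}
    (hp : p ∈ S) (hq : q ∈ S) (hd' : d x p = d x q) : p = q := by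
  obtain ⟨a, b, f, hab, hfa, hfb, hS, hd⟩ := h
  rw [hS] at hp hq
  obtain ⟨s, hs, rfl⟩ := hp
  obtain ⟨t, hts, rfl⟩ := hq
  subst hfa
  have h1 := hd a ⟨le_refl a, hab⟩ s hs
  have h2 := hd a ⟨le_refl a, hab⟩ t hts
  rw [abs_of_nonpos (sub_nonpos.mpr hs.1), neg_sub] at h1
  rw [abs_of_nonpos (sub_nonpos.mpr hts.1), neg_sub] at h2
  rw [h1, h2] at hd'
  rw [sub_left_inj.mp hd']

lemma realize {S : Set T} {x y : T} (h : IsSegment d S x y) {t : Λ}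
    (h0 : 0 ≤ t) (h1 : t ≤ d x y) : ∃ p ∈ S, d x p = t := by
  obtain ⟨a, b, f, hab, hfa, hfb, hS, hd⟩ := h
  subst hfa hfb
  have h3 := hd a ⟨le_refl a, hab⟩ b ⟨hab, le_refl b⟩
  rw [abs_of_nonpos (sub_nonpos.mpr hab), neg_sub] at h3
  rw [h3] at h1
  have hmem : a + t ∈ Set.Icc a b :=
    ⟨le_add_of_nonneg_right h0, by rw [add_comm]; exact le_sub_iff_add_le.mp h1⟩
  refine ⟨f (a + t), hS ▸ ⟨a + t, hmem, rfl⟩, ?_⟩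
  rw [hd a ⟨le_refl a, hab⟩ (a + t) hmem, sub_add_cancel_left, abs_neg,
    abs_of_nonneg h0]

lemma rev {S : Set T} {x y : T} (h : IsSegment d S x y) : IsSegment d S y x := by
  obtain ⟨a, b, f, hab, hfa, hfb, hS, hd⟩ := h
  refine ⟨a, b, fun u => f (a + b - u), hab, by simpa using hfb, by simpa using hfa, ?_, ?_⟩
  · rw [hS]
    ext z
    constructor
    · rintro ⟨s, hs, rfl⟩
      exact ⟨a + b - s, ⟨aux1 hs.2, aux2 hs.1⟩, by simp⟩
    · rintro ⟨s, hs, rfl⟩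
      exact ⟨a + b - s, ⟨aux1 hs.2, aux2 hs.1⟩, rfl⟩
  · intro s hs t hts
    rw [hd (a + b - s) ⟨aux1 hs.2, aux2 hs.1⟩ (a + b - t) ⟨aux1 hts.2, aux2 hts.1⟩]
    rw [show a + b - s - (a + b - t) = -(s - t) by abel, abs_neg]

lemma image {S : Set T} {x y : T} {φ : T → T}
    (hφ : ∀ u v, d (φ u) (φ v) = d u v) (h : IsSegment d S x y) :
    IsSegment d (φ '' S) (φ x) (φ y) := by
  obtain ⟨a, b, f, hab, hfa, hfb, hS, hd⟩ := h
  refine ⟨a, b, φ ∘ f, hab, by simp [hfa], by simp [hfb], by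
    rw [hS, Set.image_image]; rfl, ?_⟩
  intro s hs t hts
  simp only [Function.comp_apply, hφ]
  exact hd s hs t hts

lemma split {S : Set T} {x y : T} (h : IsSegment d S x y) {p : T} (hp : p ∈ S) :
    ∃ S₁ S₂ : Set T, IsSegment d S₁ x p ∧ IsSegment d S₂ p y ∧
      S₁ ∪ S₂ = S ∧ S₁ ∩ S₂ = {p} := by
  obtain ⟨a, b, f, hab, hfa, hfb, hS, hd⟩ := h
  rw [hS] at hp
  obtain ⟨c, hc, rfl⟩ := hp
  refine ⟨f '' Set.Icc a c, f '' Set.Icc c b, ?_, ?_, ?_, ?_⟩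
  · exact ⟨a, c, f, hc.1, hfa, rfl, rfl, fun s hs t hts =>
      hd s ⟨hs.1, le_trans hs.2 hc.2⟩ t ⟨hts.1, le_trans hts.2 hc.2⟩⟩
  · exact ⟨c, b, f, hc.2, rfl, hfb, rfl, fun s hs t hts =>
      hd s ⟨le_trans hc.1 hs.1, hs.2⟩ t ⟨le_trans hc.1 hts.1, hts.2⟩⟩
  · rw [← Set.image_union, Set.Icc_union_Icc_eq_Icc hc.1 hc.2, hS]
  · ext z
    simp only [Set.mem_inter_iff, Set.mem_image, Set.mem_singleton_iff]
    constructor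
    · rintro ⟨⟨s, hs, rfl⟩, ⟨t, hts, hft⟩⟩
      have hst : d (f s) (f t) = |s - t| :=
        hd s ⟨hs.1, le_trans hs.2 hc.2⟩ t ⟨le_trans hc.1 hts.1, hts.2⟩
      rw [hft] at hst
      have h0 : d (f s) (f s) = 0 := by
        rw [hd s ⟨hs.1, le_trans hs.2 hc.2⟩ s ⟨hs.1, le_trans hs.2 hc.2⟩]; simp
      rw [h0] at hst
      have hst' : s = t := sub_eq_zero.mp (abs_eq_zero.mp hst.symm)
      have : s = c := le_antisymm hs.2 (hst' ▸ hts.1)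
      rw [this]
    · rintro rfl
      exact ⟨⟨c, ⟨hc.1, le_refl c⟩, rfl⟩, ⟨c, ⟨le_refl c, hc.2⟩, rfl⟩⟩


lemma seg_subset {S₁ S : Set T} {x y : T} (ht : IsLambdaTree d)
    (h₁ : IsSegment d S₁ x y) (hS : IsSegment d S x y) (hsub : S ⊆ S₁) : S₁ ⊆ S := by
  intro p hp
  have hb := between h₁ hp
  have h0 : 0 ≤ d x p := d_nonneg ht x p
  have h1 : d x p ≤ d x y := by
    have := d_nonneg ht p y
    calc d x p ≤ d x p + d p y := le_add_of_nonneg_right this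
    _ = d x y := hb
  obtain ⟨q, hq, hdq⟩ := realize hS h0 h1
  rwa [dist_unique h₁ hp (hsub hq) hdq.symm]

lemma segment_unique {S₁ S₂ : Set T} {x y : T} (ht : IsLambdaTree d)
    (h₁ : IsSegment d S₁ x y) (h₂ : IsSegment d S₂ x y) : S₁ = S₂ := by
  obtain ⟨S, w, hSw, hint⟩ := ht.2.2.2.2.1 S₁ S₂ x y y h₁ h₂
  have hy : y ∈ S := hint ▸ ⟨mem_right h₁, mem_right h₂⟩
  have hwS₁ : w ∈ S₁ := (hint ▸ mem_right hSw : w ∈ S₁ ∩ S₂).1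
  have e1 : d x y + d y w = d x w := between hSw hy
  have e2 : d x w + d w y = d x y := between h₁ hwS₁
  have hyw : d y w = 0 := by
    have hsym : d w y = d y w := ht.2.1 w y
    rw [hsym] at e2
    have : d y w + d y w = 0 + 0 := by
      have := e1 ▸ e2
      -- this : d x y + d y w + d y w = d x y
      rw [← e1, add_assoc] at e2
      -- e2 : d x y + (d y w + d y w) = d x y
      have := add_left_cancel (e2.trans (add_zero (d x y)).symm)
      simpa using this
    exact two_cancel this
  have hwy : y = w := (ht.1 y w).mp hyw
  subst hwy
  have hsub1 : S ⊆ S₁ := hint ▸ Set.inter_subset_left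
  have hsub2 : S ⊆ S₂ := hint ▸ Set.inter_subset_right
  exact le_antisymm
    (le_trans (seg_subset ht h₁ hSw hsub1) hsub2)
    (le_trans (seg_subset ht h₂ hSw hsub2) hsub1)

noncomputable def seg (ht : IsLambdaTree d) (x y : T) : Set T :=
  (ht.2.2.2.1 x y).choose

lemma seg_spec (ht : IsLambdaTree d) (x y : T) : IsSegment d (seg ht x y) x y :=
  (ht.2.2.2.1 x y).choose_spec

lemma eq_seg {S : Set T} {x y : T} (ht : IsLambdaTree d) (h : IsSegment d S x y) :
    S = seg ht x y :=
  segment_unique ht h (seg_spec ht x y)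

lemma seg_rev (ht : IsLambdaTree d) (x y : T) : seg ht x y = seg ht y x :=
  eq_seg ht (rev (seg_spec ht x y))

lemma median (ht : IsLambdaTree d) (a b c : T) :
    ∃ m : T, m ∈ seg ht a b ∧ m ∈ seg ht a c ∧ m ∈ seg ht b c := by
  obtain ⟨S, w, hSw, hint⟩ :=
    ht.2.2.2.2.1 (seg ht a b) (seg ht a c) a b c (seg_spec ht a b) (seg_spec ht a c)
  have hwmem : w ∈ seg ht a b ∩ seg ht a c := hint ▸ mem_right hSw
  obtain ⟨P₁, P₂, hP₁, hP₂, hPu, hPi⟩ := split (seg_spec ht a b) hwmem.1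
  obtain ⟨Q₁, Q₂, hQ₁, hQ₂, hQu, hQi⟩ := split (seg_spec ht a c) hwmem.2
  have hSP₁ : S = P₁ := segment_unique ht hSw hP₁
  have hkey : P₂ ∩ Q₂ = {w} := by
    apply Set.eq_singleton_iff_unique_mem.mpr
    refine ⟨⟨mem_left hP₂, mem_left hQ₂⟩, ?_⟩
    rintro z ⟨hz1, hz2⟩
    have hzab : z ∈ seg ht a b := hPu ▸ Set.mem_union_right _ hz1
    have hzac : z ∈ seg ht a c := hQu ▸ Set.mem_union_right _ hz2
    have hzS : z ∈ S := hint ▸ ⟨hzab, hzac⟩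
    have : z ∈ P₁ ∩ P₂ := ⟨hSP₁ ▸ hzS, hz1⟩
    rw [hPi] at this
    exact this
  have hbc : IsSegment d (P₂ ∪ Q₂) b c := ht.2.2.2.2.2 P₂ Q₂ w b c hP₂ hQ₂ hkey
  refine ⟨w, hwmem.1, hwmem.2, ?_⟩
  rw [← eq_seg ht hbc]
  exact Set.mem_union_left _ (mem_left hP₂)


section Action

variable {G : Type*} [Group G] [MulAction G T]
variable (ht : IsLambdaTree d)

lemma seg_smul (hiso : ∀ (g : G) (x y : T), d (g • x) (g • y) = d x y) (g : G) (x y : T) :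
    (fun z => g • z) '' (seg ht x y) = seg ht (g • x) (g • y) :=
  eq_seg ht (image (hiso g) (seg_spec ht x y))

lemma fix_convex (hiso : ∀ (g : G) (x y : T), d (g • x) (g • y) = d x y) {g : G} {x y : T} (hx : g • x = x) (hy : g • y = y)
    {p : T} (hp : p ∈ seg ht x y) : g • p = p := by
  have hmem : g • p ∈ seg ht x y := by
    have : g • p ∈ (fun z => g • z) '' (seg ht x y) := ⟨p, hp, rfl⟩
    rwa [seg_smul ht hiso, hx, hy] at this
  have hdist : d x (g • p) = d x p := by
    conv_lhs => rw [← hx, hiso]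
  exact dist_unique (seg_spec ht x y) hmem hp hdist

lemma proj (hiso : ∀ (g : G) (x y : T), d (g • x) (g • y) = d x y) {g : G} {q : T} (hq : g • q = q) (p : T) :
    ∃ m : T, g • m = m ∧ m ∈ seg ht p (g • p) ∧ d p m = d (g • p) m := by
  obtain ⟨m, h1, h2, h3⟩ := median ht q p (g • p)
  have hqp : d q (g • p) = d q p := by
    conv_lhs => rw [← hq, hiso]
  have hgm : g • m ∈ seg ht q (g • p) := by
    have : g • m ∈ (fun z => g • z) '' (seg ht q p) := ⟨m, h1, rfl⟩
    rwa [seg_smul ht hiso, hq] at this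
  have hdm : d q (g • m) = d q m := by
    conv_lhs => rw [← hq, hiso]
  have hfix : g • m = m := dist_unique (seg_spec ht q (g • p)) hgm h2 hdm
  have e1 : d q m + d m p = d q p := between (seg_spec ht q p) h1
  have e2 : d q m + d m (g • p) = d q (g • p) := between (seg_spec ht q (g • p)) h2
  rw [hqp] at e2
  have : d m p = d m (g • p) := add_left_cancel (e1.trans e2.symm)
  exact ⟨m, hfix, h3, by rw [ht.2.1 p m, ht.2.1 (g • p) m, this]⟩

lemma serre (ht : IsLambdaTree d) (hiso : ∀ (g : G) (x y : T), d (g • x) (g • y) = d x y) (g h : G) (hg : ∃ x : T, g • x = x) (hh : ∃ x : T, h • x = x)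
    (hgh : ∃ x : T, (g * h) • x = x) : ∃ m : T, g • m = m ∧ h • m = m := by
  obtain ⟨qg, hqg⟩ := hg
  obtain ⟨qh, hqh⟩ := hh
  obtain ⟨p, hp⟩ := hgh
  rw [mul_smul] at hp
  obtain ⟨m, hmfix, hmmem, hmd⟩ := proj ht hiso hqh p
  obtain ⟨m', hm'fix, hm'mem, hm'd⟩ := proj ht hiso hqg p
  have hinv : h • p = g⁻¹ • p := eq_inv_smul_iff.mpr hp
  have hdpp : d p (g • p) = d p (h • p) := by
    rw [← hiso g⁻¹ p (g • p), inv_smul_smul, ht.2.1 (g⁻¹ • p) p, hinv]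
  have e1 : d p m + d m (h • p) = d p (h • p) := between (seg_spec ht p (h • p)) hmmem
  have e2 : d p m' + d m' (g • p) = d p (g • p) := between (seg_spec ht p (g • p)) hm'mem
  have t1 : d p m + d p m = d p (h • p) := by
    rw [ht.2.1 m (h • p), ← hmd] at e1; exact e1
  have t2 : d p m' + d p m' = d p (h • p) := by
    rw [ht.2.1 m' (g • p), ← hm'd, hdpp] at e2; exact e2
  have hmm' : d p m = d p m' := two_cancel (t1.trans t2.symm)
  -- g⁻¹ • m' lies on seg p (h • p)
  have hseg' : (fun z => g⁻¹ • z) '' (seg ht p (g • p)) = seg ht (h • p) p := by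
    rw [seg_smul ht hiso, inv_smul_smul, hinv]
  have hmem' : g⁻¹ • m' ∈ seg ht p (h • p) := by
    have : g⁻¹ • m' ∈ (fun z => g⁻¹ • z) '' (seg ht p (g • p)) := ⟨m', hm'mem, rfl⟩
    rw [hseg', seg_rev ht (h • p) p] at this
    exact this
  have hd' : d (h • p) (g⁻¹ • m') = d (h • p) m := by
    rw [hinv, hiso g⁻¹ p m', ← hmm', hmd, hinv]
  have heq : g⁻¹ • m' = m :=
    dist_unique (rev (seg_spec ht p (h • p))) hmem' hmmem hd'
  have : g • m = m := by
    have h1 : m' = g • m := by rw [← heq, smul_inv_smul]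
    have h2 : g • (g • m) = g • m := by rw [← h1]; exact hm'fix
    exact smul_left_cancel g h2
  exact ⟨m, this, hmfix⟩


end Action

def Conv (ht : IsLambdaTree d) (X : Set T) : Prop :=
  ∀ ⦃x⦄, x ∈ X → ∀ ⦃y⦄, y ∈ X → seg ht x y ⊆ X

lemma conv_inter {ht : IsLambdaTree d} {X Y : Set T} (hX : Conv ht X) (hY : Conv ht Y) :
    Conv ht (X ∩ Y) := fun x hx y hy z hz =>
  ⟨hX hx.1 hy.1 hz, hY hx.2 hy.2 hz⟩

lemma helly (ht : IsLambdaTree d) :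
    ∀ (l : List (Set T)) (X : Set T), Conv ht X → (∀ Y ∈ l, Conv ht Y) →
      X.Nonempty → (∀ Y ∈ l, (X ∩ Y).Nonempty) →
      (∀ Y ∈ l, ∀ Z ∈ l, (Y ∩ Z).Nonempty) →
      ∃ x, x ∈ X ∧ ∀ Y ∈ l, x ∈ Y := by
  intro l
  induction l with
  | nil =>
    intro X _ _ hne _ _
    obtain ⟨x, hx⟩ := hne
    exact ⟨x, hx, by simp⟩
  | cons Y l ih =>
    intro X hXc hc hne hpair hall
    have hXY : (X ∩ Y).Nonempty := hpair Y (List.mem_cons_self (a := Y) (l := l))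
    have hYc : Conv ht Y := hc Y (List.mem_cons_self (a := Y) (l := l))
    obtain ⟨x, hx1, hx2⟩ := ih (X ∩ Y) (conv_inter hXc hYc)
      (fun Z hZ => hc Z (List.mem_cons_of_mem Y hZ)) hXY
      (fun Z hZ => by
        -- need ((X ∩ Y) ∩ Z).Nonempty
        obtain ⟨u, hu⟩ := hall Y (List.mem_cons_self (a := Y) (l := l)) Z (List.mem_cons_of_mem Y hZ)
        obtain ⟨v, hv⟩ := hpair Z (List.mem_cons_of_mem Y hZ)
        obtain ⟨w, hw⟩ := hXY
        -- u ∈ Y ∩ Z, v ∈ X ∩ Z, w ∈ X ∩ Y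
        obtain ⟨m, hm1, hm2, hm3⟩ := median ht v w u
        -- m ∈ seg v w ⊆ X, m ∈ seg v u ⊆ Z, m ∈ seg w u ⊆ Y
        exact ⟨m, ⟨⟨hXc hv.1 hw.1 hm1, hc Y (List.mem_cons_self (a := Y) (l := l)) hw.2 hu.1 hm3⟩,
          hc Z (List.mem_cons_of_mem Y hZ) hv.2 hu.2 hm2⟩⟩)
      (fun Z hZ W hW => hall Z (List.mem_cons_of_mem Y hZ) W (List.mem_cons_of_mem Y hW))
    refine ⟨x, hx1.1, ?_⟩
    intro Z hZ
    rcases List.mem_cons.mp hZ with rfl | hZ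
    · exact hx1.2
    · exact hx2 Z hZ

end Stmt14

/-- If a finitely generated group `G` acts by isometries on a `Λ`-tree with
`2Λ = Λ` and every element of `G` has a fixed point, then `G` has a global fixed
point. -/
theorem stmt_14 {Λ : Type*} [AddCommGroup Λ] [LinearOrder Λ] [IsOrderedAddMonoid Λ] {T : Type*}
    (G : Type*) [Group G] [Group.FG G] [MulAction G T]
    (d : T → T → Λ) (htree : IsLambdaTree d)
    (h2 : ∀ lam : Λ, ∃ mu : Λ, mu + mu = lam)
    (hiso : ∀ (g : G) (x y : T), d (g • x) (g • y) = d x y)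
    (hell : ∀ g : G, ∃ x : T, g • x = x) :
    ∃ x : T, ∀ g : G, g • x = x := by
  classical
  obtain ⟨S, hSgen, hSfin⟩ := Group.fg_iff.mp ‹Group.FG G›
  set l : List (Set T) := hSfin.toFinset.toList.map (fun g => {x | g • x = x}) with hl
  have hfixmem : ∀ g ∈ S, ({x : T | g • x = x}) ∈ l := by
    intro g hg
    have hg' : g ∈ hSfin.toFinset.toList := by
      rw [Finset.mem_toList, Set.Finite.mem_toFinset]; exact hg
    exact List.mem_map.mpr ⟨g, hg', rfl⟩
  obtain ⟨x0, _⟩ := hell 1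
  obtain ⟨x, _, hx⟩ := Stmt14.helly htree l Set.univ
    (fun _ _ _ _ _ _ => Set.mem_univ _)
    (by
      intro Y hY
      obtain ⟨g, _, rfl⟩ := List.mem_map.mp hY
      exact fun u hu v hv z hz => Stmt14.fix_convex htree hiso hu hv hz)
    ⟨x0, Set.mem_univ x0⟩
    (by
      intro Y hY
      obtain ⟨g, _, rfl⟩ := List.mem_map.mp hY
      obtain ⟨z, hz⟩ := hell g
      exact ⟨z, Set.mem_univ z, hz⟩)
    (by
      intro Y hY Z hZ
      obtain ⟨g, _, rfl⟩ := List.mem_map.mp hY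
      obtain ⟨h, _, rfl⟩ := List.mem_map.mp hZ
      obtain ⟨m, hm1, hm2⟩ := Stmt14.serre htree hiso g h (hell g) (hell h) (hell (g * h))
      exact ⟨m, hm1, hm2⟩)
  refine ⟨x, fun g => ?_⟩
  have hstab : Subgroup.closure S ≤ MulAction.stabilizer G x := by
    rw [Subgroup.closure_le]
    intro g hg
    have hxg : x ∈ {y : T | g • y = y} := hx _ (hfixmem g hg)
    exact MulAction.mem_stabilizer_iff.mpr hxg
  have : g ∈ MulAction.stabilizer G x := hstab (hSgen ▸ Subgroup.mem_top g)
  exact this
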